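/- The functions 𝒜 and 𝒩 are strictly increasing on the interval [0, σ_max(F)^{−2}). -/

import Mathlib

open MeasureTheory Real Matrix

/-- The largest singular value of `F`: the supremum of `‖F w‖` over unit vectors. -/
noncomputable def sigmaMax {s ℓ : ℕ} (F : Matrix (Fin s) (Fin ℓ) ℝ) : ℝ :=
  sSup {x : ℝ | ∃ w : Fin ℓ → ℝ, (∑ i, (w i)^2) = 1 ∧ x = Real.sqrt (∑ j, (F.mulVec w j)^2)}

/-- `S(q) = (I − qΛ)⁻¹` with `Λ = FᵀF`. -/
noncomputable def Sq {s ℓ : ℕ} (F : Matrix (Fin s) (Fin ℓ) ℝ) (q : ℝ) :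
    Matrix (Fin ℓ) (Fin ℓ) ℝ :=
  (1 - q • (Fᵀ * F))⁻¹

/-- `𝒜(q) = −(1/2)·ln det(ℓ·S(q)/Tr S(q))`. -/
noncomputable def Afun {s ℓ : ℕ} (F : Matrix (Fin s) (Fin ℓ) ℝ) (q : ℝ) : ℝ :=
  -(1 / 2) * Real.log ((((ℓ : ℝ) / (Sq F q).trace) • Sq F q).det)

/-- `𝒩(q) = sqrt(Tr(Λ·S(q))/Tr S(q))`. -/
noncomputable def Nfun {s ℓ : ℕ} (F : Matrix (Fin s) (Fin ℓ) ℝ) (q : ℝ) : ℝ :=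
  Real.sqrt ((Fᵀ * F * Sq F q).trace / (Sq F q).trace)

/-- `𝔄(q,γ) = (1/2)·ln det(I − qΛ) − (ℓ/2)·ln(1 − qγ²)`. -/
noncomputable def AAfun {s ℓ : ℕ} (F : Matrix (Fin s) (Fin ℓ) ℝ) (q γ : ℝ) : ℝ :=
  (1 / 2) * Real.log (1 - q • (Fᵀ * F)).det - ((ℓ : ℝ) / 2) * Real.log (1 - q * γ^2)


section AuxIneq

open Finset

variable {ι : Type*} [Fintype ι]


variable {ι : Type*} [Fintype ι]

lemma cross_id {mi mj a b : ℝ} (hai : 1 - a*mi ≠ 0) (hbi : 1 - b*mi ≠ 0)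
    (haj : 1 - a*mj ≠ 0) (hbj : 1 - b*mj ≠ 0) :
    (mi - mj) * ((1-b*mi)⁻¹ * (1-a*mj)⁻¹ - (1-a*mi)⁻¹ * (1-b*mj)⁻¹)
      = (b-a)*(mi-mj)^2 * ((1-a*mi)⁻¹*((1-b*mi)⁻¹*((1-a*mj)⁻¹*(1-b*mj)⁻¹))) := by
  linear_combination (mi-mj)*(-((1-b*mi)⁻¹*(1-a*mj)⁻¹)) * mul_inv_cancel₀ hai
    + (mi-mj)*(-((1-b*mi)⁻¹*(1-a*mj)⁻¹)*((1-a*mi)*(1-a*mi)⁻¹)) * mul_inv_cancel₀ hbj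
    + (mi-mj)*((1-a*mi)⁻¹*(1-b*mj)⁻¹) * mul_inv_cancel₀ hbi
    + (mi-mj)*((1-a*mi)⁻¹*(1-b*mj)⁻¹)*((1-b*mi)*(1-b*mi)⁻¹) * mul_inv_cancel₀ haj

lemma key_N (μ : ι → ℝ) {a b : ℝ} (hab : a < b)
    (hda : ∀ i, 0 < 1 - a*μ i) (hdb : ∀ i, 0 < 1 - b*μ i)
    (hne : ∃ i j, μ i ≠ μ j) :
    (∑ i, μ i * (1-a*μ i)⁻¹) * (∑ i, (1-b*μ i)⁻¹)
      < (∑ i, μ i * (1-b*μ i)⁻¹) * (∑ i, (1-a*μ i)⁻¹) := by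
  obtain ⟨i0, j0, hij⟩ := hne
  set xa : ι → ℝ := fun i => (1-a*μ i)⁻¹ with hxa
  set xb : ι → ℝ := fun i => (1-b*μ i)⁻¹ with hxb
  have expand : (∑ i, μ i * xb i) * (∑ j, xa j) - (∑ i, μ i * xa i) * (∑ j, xb j)
      = ∑ i, ∑ j, (μ i * (xb i * xa j - xa i * xb j)) := by
    rw [Finset.sum_mul_sum, Finset.sum_mul_sum, ← Finset.sum_sub_distrib]
    refine Finset.sum_congr rfl fun i _ => ?_
    rw [← Finset.sum_sub_distrib]
    exact Finset.sum_congr rfl fun j _ => by ring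
  have hterm : ∀ i j : ι, 0 ≤ (μ i - μ j) * (xb i * xa j - xa i * xb j) := by
    intro i j
    have h := cross_id (ne_of_gt (hda i)) (ne_of_gt (hdb i)) (ne_of_gt (hda j)) (ne_of_gt (hdb j))
    have : (μ i - μ j) * (xb i * xa j - xa i * xb j)
        = (b-a)*(μ i-μ j)^2 * ((1-a*μ i)⁻¹*((1-b*μ i)⁻¹*((1-a*μ j)⁻¹*(1-b*μ j)⁻¹))) := by
      rw [hxa, hxb]; exact h
    rw [this]
    have h1 : (0:ℝ) ≤ (b-a)*(μ i-μ j)^2 :=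
      mul_nonneg (le_of_lt (sub_pos.2 hab)) (sq_nonneg _)
    have h2 : (0:ℝ) < (1-a*μ i)⁻¹*((1-b*μ i)⁻¹*((1-a*μ j)⁻¹*(1-b*μ j)⁻¹)) := by
      have := hda i; have := hdb i; have := hda j; have := hdb j; positivity
    exact mul_nonneg h1 (le_of_lt h2)
  have hstrict : 0 < (μ i0 - μ j0) * (xb i0 * xa j0 - xa i0 * xb j0) := by
    have h := cross_id (ne_of_gt (hda i0)) (ne_of_gt (hdb i0)) (ne_of_gt (hda j0)) (ne_of_gt (hdb j0))
    have heq : (μ i0 - μ j0) * (xb i0 * xa j0 - xa i0 * xb j0)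
        = (b-a)*(μ i0-μ j0)^2 * ((1-a*μ i0)⁻¹*((1-b*μ i0)⁻¹*((1-a*μ j0)⁻¹*(1-b*μ j0)⁻¹))) := by
      rw [hxa, hxb]; exact h
    rw [heq]
    have hsq : 0 < (μ i0 - μ j0)^2 :=
      lt_of_le_of_ne (sq_nonneg _) (Ne.symm (pow_ne_zero 2 (sub_ne_zero.2 hij)))
    have h2 : (0:ℝ) < (1-a*μ i0)⁻¹*((1-b*μ i0)⁻¹*((1-a*μ j0)⁻¹*(1-b*μ j0)⁻¹)) := by
      have := hda i0; have := hdb i0; have := hda j0; have := hdb j0; positivity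
    exact mul_pos (mul_pos (sub_pos.2 hab) hsq) h2
  have hswap : (∑ i, ∑ j, (μ i * (xb i * xa j - xa i * xb j)))
      = ∑ i, ∑ j, (μ j * (xb j * xa i - xa j * xb i)) :=
    Finset.sum_comm
  have h2D : 2 * ((∑ i, μ i * xb i) * (∑ j, xa j) - (∑ i, μ i * xa i) * (∑ j, xb j))
      = ∑ i, ∑ j, ((μ i - μ j) * (xb i * xa j - xa i * xb j)) := by
    rw [two_mul, expand]
    nth_rewrite 2 [hswap]
    rw [← Finset.sum_add_distrib]
    refine Finset.sum_congr rfl fun i _ => ?_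
    rw [← Finset.sum_add_distrib]
    exact Finset.sum_congr rfl fun j _ => by ring
  have hpos : 0 < ∑ i, ∑ j, ((μ i - μ j) * (xb i * xa j - xa i * xb j)) := by
    refine Finset.sum_pos' (fun i _ => Finset.sum_nonneg fun j _ => hterm i j) ?_
    exact ⟨i0, Finset.mem_univ _,
      Finset.sum_pos' (fun j _ => hterm i0 j) ⟨j0, Finset.mem_univ _, hstrict⟩⟩
  nlinarith [h2D, hpos]



lemma key_A (μ : ι → ℝ) {a b : ℝ} (ha : 0 ≤ a) (hab : a < b)
    (hda : ∀ i, 0 < 1 - a*μ i) (hdb : ∀ i, 0 < 1 - b*μ i)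
    (hne : ∃ i j, μ i ≠ μ j) :
    (∑ i, (1-a*μ i)⁻¹) ^ (Fintype.card ι) * ∏ i, (1-b*μ i)⁻¹
      < (∑ i, (1-b*μ i)⁻¹) ^ (Fintype.card ι) * ∏ i, (1-a*μ i)⁻¹ := by
  obtain ⟨i0, j0, hij⟩ := hne
  have hne' : Nonempty ι := ⟨i0⟩
  set xa : ι → ℝ := fun i => (1-a*μ i)⁻¹ with hxa
  set xb : ι → ℝ := fun i => (1-b*μ i)⁻¹ with hxb
  have hxap : ∀ i, 0 < xa i := fun i => inv_pos.2 (hda i)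
  have hxbp : ∀ i, 0 < xb i := fun i => inv_pos.2 (hdb i)
  have hTa : 0 < ∑ i, xa i := Finset.sum_pos (fun i _ => hxap i) Finset.univ_nonempty
  have hTb : 0 < ∑ i, xb i := Finset.sum_pos (fun i _ => hxbp i) Finset.univ_nonempty
  set r : ι → ℝ := fun i => xb i / xa i with hr
  have hr_eq : ∀ i, r i = (1-a*μ i)/(1-b*μ i) := fun i => by
    rw [hr, hxa, hxb]; field_simp
  have hrp : ∀ i, 0 < r i := fun i => div_pos (hxbp i) (hxap i)
  set p : ι → ℝ := fun i => xa i / (∑ i, xa i) with hp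
  have hpp : ∀ i, 0 < p i := fun i => div_pos (hxap i) hTa
  have hps : ∑ i, p i = 1 := by
    rw [hp, ← Finset.sum_div]
    exact div_self (ne_of_gt hTa)
  have hpr : ∑ i, p i * r i = (∑ i, xb i) / (∑ i, xa i) := by
    calc ∑ i, p i * r i = ∑ i, xb i / (∑ j, xa j) := by
          refine Finset.sum_congr rfl fun i _ => ?_
          rw [hp, hr, div_mul_div_comm, mul_comm (∑ j, xa j) (xa i),
            mul_div_mul_left _ _ (ne_of_gt (hxap i))]
      _ = (∑ i, xb i) / (∑ i, xa i) := by rw [Finset.sum_div]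
  have hmono : ∀ i j : ι, μ i < μ j → r i < r j := by
    intro i j hlt
    rw [hr_eq i, hr_eq j, div_lt_div_iff₀ (hdb i) (hdb j)]
    nlinarith [mul_pos (sub_pos.2 hab) (sub_pos.2 hlt)]
  have hr_le : ∀ i j : ι, r i < r j → μ i ≤ μ j := by
    intro i j hlt
    by_contra hgt
    push_neg at hgt
    exact absurd (hmono j i hgt) (not_lt.2 (le_of_lt hlt))
  have hrne : r i0 ≠ r j0 := by
    rcases hij.lt_or_gt with h | h
    · exact ne_of_lt (hmono i0 j0 h)
    · exact ne_of_gt (hmono j0 i0 h)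
  -- strict Jensen
  have jensen : ∑ i, p i * Real.log (r i) < Real.log ((∑ i, xb i) / (∑ i, xa i)) := by
    have h := strictConcaveOn_log_Ioi.lt_map_sum (t := Finset.univ) (w := p) (p := r)
      (fun i _ => hpp i) hps (fun i _ => hrp i)
      ⟨i0, Finset.mem_univ _, j0, Finset.mem_univ _, hrne⟩
    simpa [smul_eq_mul, hpr] using h
  -- Chebyshev
  have hmv : Monovary p (fun i => Real.log (r i)) := by
    intro i j hlt
    have hrij : r i < r j := (Real.log_lt_log_iff (hrp i) (hrp j)).1 hlt
    have hμ : μ i ≤ μ j := hr_le _ _ hrij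
    have h1 : 1 - a*μ j ≤ 1 - a*μ i := by nlinarith
    have hxa' : xa i ≤ xa j := by rw [hxa]; exact inv_anti₀ (hda j) h1
    rw [hp]
    exact (div_le_div_iff_of_pos_right hTa).2 hxa'
  have cheb : ∑ i, Real.log (r i) ≤ (Fintype.card ι : ℝ) * ∑ i, p i * Real.log (r i) := by
    have h := hmv.sum_mul_sum_le_card_mul_sum
    rwa [hps, one_mul] at h
  have hcard : 0 < (Fintype.card ι : ℝ) := by
    exact_mod_cast Fintype.card_pos
  have main : ∑ i, Real.log (r i)
      < (Fintype.card ι : ℝ) * Real.log ((∑ i, xb i) / (∑ i, xa i)) :=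
    lt_of_le_of_lt cheb (mul_lt_mul_of_pos_left jensen hcard)
  -- convert to the multiplicative statement
  have hPa : 0 < ∏ i, xa i := Finset.prod_pos fun i _ => hxap i
  have hPb : 0 < ∏ i, xb i := Finset.prod_pos fun i _ => hxbp i
  have hL : 0 < (∑ i, xa i) ^ (Fintype.card ι) * ∏ i, xb i :=
    mul_pos (pow_pos hTa _) hPb
  have hR : 0 < (∑ i, xb i) ^ (Fintype.card ι) * ∏ i, xa i :=
    mul_pos (pow_pos hTb _) hPa
  rw [show (∑ i, (1-a*μ i)⁻¹) = ∑ i, xa i from rfl]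
  rw [← Real.log_lt_log_iff hL hR]
  rw [Real.log_mul (ne_of_gt (pow_pos hTa _)) (ne_of_gt hPb),
      Real.log_mul (ne_of_gt (pow_pos hTb _)) (ne_of_gt hPa),
      Real.log_pow, Real.log_pow,
      Real.log_prod (fun i _ => ne_of_gt (hxap i)),
      Real.log_prod (fun i _ => ne_of_gt (hxbp i))]
  have hlogr : ∑ i, Real.log (r i) = (∑ i, Real.log (xb i)) - ∑ i, Real.log (xa i) := by
    rw [← Finset.sum_sub_distrib]
    refine Finset.sum_congr rfl fun i _ => ?_
    rw [hr, Real.log_div (ne_of_gt (hxbp i)) (ne_of_gt (hxap i))]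
  rw [Real.log_div (ne_of_gt hTb) (ne_of_gt hTa)] at main
  rw [hlogr] at main
  push_cast at main ⊢
  nlinarith [main]

end AuxIneq

lemma lam_isHermitian {s ℓ : ℕ} (F : Matrix (Fin s) (Fin ℓ) ℝ) : (Fᵀ * F).IsHermitian := by
  have h := Matrix.isHermitian_conjTranspose_mul_self F
  rwa [Matrix.conjTranspose_eq_transpose_of_trivial] at h

lemma lam_posSemidef {s ℓ : ℕ} (F : Matrix (Fin s) (Fin ℓ) ℝ) : (Fᵀ * F).PosSemidef := by
  have h := Matrix.posSemidef_conjTranspose_mul_self F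
  rwa [Matrix.conjTranspose_eq_transpose_of_trivial] at h

lemma lam_spectral {s ℓ : ℕ} (F : Matrix (Fin s) (Fin ℓ) ℝ) :
    Fᵀ * F = ((lam_isHermitian F).eigenvectorUnitary : Matrix (Fin ℓ) (Fin ℓ) ℝ) *
      Matrix.diagonal ((lam_isHermitian F).eigenvalues) *
      (star ((lam_isHermitian F).eigenvectorUnitary : Matrix (Fin ℓ) (Fin ℓ) ℝ)) := by
  have h := (lam_isHermitian F).spectral_theorem
  rwa [RCLike.ofReal_real_eq_id, Function.id_comp] at h

lemma conj_mul_conj {ℓ : ℕ} (U A B : Matrix (Fin ℓ) (Fin ℓ) ℝ) (hU1 : star U * U = 1) :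
    (U * A * star U) * (U * B * star U) = U * (A * B) * star U := by
  have h : star U * (U * (B * star U)) = B * star U := by
    rw [← Matrix.mul_assoc, hU1, Matrix.one_mul]
  simp only [Matrix.mul_assoc, h]

lemma Sq_spectral {s ℓ : ℕ} (F : Matrix (Fin s) (Fin ℓ) ℝ) (q : ℝ)
    (hq : ∀ i, 1 - q * (lam_isHermitian F).eigenvalues i ≠ 0) :
    (Sq F q).trace = (∑ i, (1 - q * (lam_isHermitian F).eigenvalues i)⁻¹) ∧
    (Fᵀ * F * Sq F q).trace
      = (∑ i, (lam_isHermitian F).eigenvalues i * (1 - q * (lam_isHermitian F).eigenvalues i)⁻¹) ∧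
    (Sq F q).det = (∏ i, (1 - q * (lam_isHermitian F).eigenvalues i)⁻¹) := by
  set μ := (lam_isHermitian F).eigenvalues with hμdef
  set U : Matrix (Fin ℓ) (Fin ℓ) ℝ := ((lam_isHermitian F).eigenvectorUnitary : Matrix (Fin ℓ) (Fin ℓ) ℝ) with hUdef
  have hU1 : star U * U = 1 := Matrix.mem_unitaryGroup_iff'.mp (lam_isHermitian F).eigenvectorUnitary.2
  have hU2 : U * star U = 1 := Matrix.mem_unitaryGroup_iff.mp (lam_isHermitian F).eigenvectorUnitary.2
  have hspec : Fᵀ * F = U * Matrix.diagonal μ * star U := lam_spectral F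
  have hd : Matrix.diagonal (fun i => 1 - q * μ i)
      = 1 - q • Matrix.diagonal μ := by
    rw [← Matrix.diagonal_one, ← Matrix.diagonal_smul, ← Matrix.diagonal_sub]
    rfl
  have hone : 1 - q • (Fᵀ * F) = U * Matrix.diagonal (fun i => 1 - q * μ i) * star U := by
    rw [hd, Matrix.mul_sub, Matrix.sub_mul, Matrix.mul_one, hU2,
      Matrix.mul_smul, Matrix.smul_mul, ← hspec]
  have hdd : Matrix.diagonal (fun i => 1 - q * μ i) *
      Matrix.diagonal (fun i => (1 - q * μ i)⁻¹) = 1 := by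
    rw [Matrix.diagonal_mul_diagonal]
    have h : (fun i => (1 - q * μ i) * (1 - q * μ i)⁻¹) = fun _ => (1:ℝ) :=
      funext fun i => mul_inv_cancel₀ (hq i)
    rw [h, Matrix.diagonal_one]
  have hSq : Sq F q = U * Matrix.diagonal (fun i => (1 - q * μ i)⁻¹) * star U := by
    show (1 - q • (Fᵀ * F))⁻¹ = _
    rw [hone]
    apply Matrix.inv_eq_right_inv
    rw [conj_mul_conj _ _ _ hU1, hdd, Matrix.mul_one, hU2]
  refine ⟨?_, ?_, ?_⟩
  · rw [hSq, Matrix.trace_mul_cycle, hU1, Matrix.one_mul, Matrix.trace_diagonal]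
  · rw [hSq, hspec, conj_mul_conj _ _ _ hU1, Matrix.trace_mul_cycle, hU1, Matrix.one_mul,
      Matrix.diagonal_mul_diagonal, Matrix.trace_diagonal]
  · have hdetU : U.det * (star U).det = 1 := by
      rw [← Matrix.det_mul, hU2, Matrix.det_one]
    rw [hSq, Matrix.det_mul, Matrix.det_mul, Matrix.det_diagonal]
    linear_combination (∏ i, (1 - q * μ i)⁻¹) * hdetU

lemma sigmaMax_bddAbove {s ℓ : ℕ} (F : Matrix (Fin s) (Fin ℓ) ℝ) :
    BddAbove {x : ℝ | ∃ w : Fin ℓ → ℝ, (∑ i, (w i)^2) = 1 ∧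
      x = Real.sqrt (∑ j, (F.mulVec w j)^2)} := by
  refine ⟨Real.sqrt (∑ j, ∑ k, (F j k)^2), ?_⟩
  rintro x ⟨w, hw, rfl⟩
  apply Real.sqrt_le_sqrt
  refine Finset.sum_le_sum fun j _ => ?_
  have h := Finset.sum_mul_sq_le_sq_mul_sq Finset.univ (fun k => F j k) w
  calc (F.mulVec w j)^2 = (∑ k, F j k * w k)^2 := by
        simp [Matrix.mulVec, dotProduct]
    _ ≤ (∑ k, (F j k)^2) * ∑ k, (w k)^2 := h
    _ = ∑ k, (F j k)^2 := by rw [hw, mul_one]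

lemma eigen_le_sigmaMax_sq {s ℓ : ℕ} (F : Matrix (Fin s) (Fin ℓ) ℝ) (i : Fin ℓ) :
    (lam_isHermitian F).eigenvalues i ≤ sigmaMax F ^ 2 := by
  set μ := (lam_isHermitian F).eigenvalues with hμdef
  set v : Fin ℓ → ℝ := ⇑((lam_isHermitian F).eigenvectorBasis i) with hv
  have hv1 : ∑ k, (v k)^2 = 1 := by
    have hnorm : ‖(lam_isHermitian F).eigenvectorBasis i‖ = 1 :=
      (lam_isHermitian F).eigenvectorBasis.orthonormal.1 i
    have h2 : ‖(lam_isHermitian F).eigenvectorBasis i‖ ^ 2 = 1 := by rw [hnorm]; norm_num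
    rw [EuclideanSpace.norm_eq, Real.sq_sqrt (by positivity)] at h2
    simpa [Real.norm_eq_abs, sq_abs] using h2
  have hFv : ∑ j, (F.mulVec v j)^2 = μ i := by
    have hmv : (Fᵀ * F) *ᵥ v = μ i • v := (lam_isHermitian F).mulVec_eigenvectorBasis i
    calc ∑ j, (F.mulVec v j)^2 = (F *ᵥ v) ⬝ᵥ (F *ᵥ v) := by
          simp [dotProduct, pow_two]
      _ = v ⬝ᵥ ((Fᵀ * F) *ᵥ v) := by
          rw [← Matrix.mulVec_mulVec, Matrix.dotProduct_mulVec v Fᵀ,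
            Matrix.vecMul_transpose]
      _ = v ⬝ᵥ (μ i • v) := by rw [hmv]
      _ = μ i * ∑ k, (v k)^2 := by
          simp only [dotProduct, Pi.smul_apply, smul_eq_mul, Finset.mul_sum]
          exact Finset.sum_congr rfl fun k _ => by ring
      _ = μ i := by rw [hv1, mul_one]
  have hmem : Real.sqrt (μ i) ∈ {x : ℝ | ∃ w : Fin ℓ → ℝ, (∑ i, (w i)^2) = 1 ∧
      x = Real.sqrt (∑ j, (F.mulVec w j)^2)} := ⟨v, hv1, by rw [hFv]⟩
  have hle : Real.sqrt (μ i) ≤ sigmaMax F := le_csSup (sigmaMax_bddAbove F) hmem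
  have hμ0 : 0 ≤ μ i := (lam_posSemidef F).eigenvalues_nonneg i
  calc μ i = (Real.sqrt (μ i))^2 := (Real.sq_sqrt hμ0).symm
    _ ≤ (sigmaMax F)^2 := by
        have := Real.sqrt_nonneg (μ i)
        nlinarith

lemma eigen_exists_ne {s ℓ : ℕ} (F : Matrix (Fin s) (Fin ℓ) ℝ)
    (hΛ : ∀ c : ℝ, Fᵀ * F ≠ c • (1 : Matrix (Fin ℓ) (Fin ℓ) ℝ)) :
    ∃ i j, (lam_isHermitian F).eigenvalues i ≠ (lam_isHermitian F).eigenvalues j := by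
  by_contra h
  push_neg at h
  set μ := (lam_isHermitian F).eigenvalues with hμdef
  rcases Nat.eq_zero_or_pos ℓ with hl | hl
  · subst hl
    exact hΛ 0 (Subsingleton.elim _ _)
  · have hi : Nonempty (Fin ℓ) := ⟨⟨0, hl⟩⟩
    set c := μ (Classical.arbitrary (Fin ℓ)) with hc
    apply hΛ c
    have hd : Matrix.diagonal μ = c • (1 : Matrix (Fin ℓ) (Fin ℓ) ℝ) := by
      ext i j
      rcases eq_or_ne i j with rfl | hij
      · simp only [Matrix.diagonal_apply_eq, Matrix.smul_apply, Matrix.one_apply_eq,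
          smul_eq_mul, mul_one]
        exact h i _
      · simp [Matrix.diagonal_apply_ne _ hij, Matrix.one_apply_ne hij]
    set U : Matrix (Fin ℓ) (Fin ℓ) ℝ :=
      ((lam_isHermitian F).eigenvectorUnitary : Matrix (Fin ℓ) (Fin ℓ) ℝ) with hUdef
    have hU2 : U * star U = 1 :=
      Matrix.mem_unitaryGroup_iff.mp (lam_isHermitian F).eigenvectorUnitary.2
    rw [lam_spectral F, ← hμdef, ← hUdef, hd, Matrix.mul_smul, Matrix.smul_mul,
      Matrix.mul_one, hU2]

/-- The functions `𝒜` and `𝒩` are strictly increasing on `[0, σ_max(F)^{−2})`. -/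
theorem Afun_Nfun_strictMonoOn
    (s ℓ : ℕ) (F : Matrix (Fin s) (Fin ℓ) ℝ)
    (hΛ : ∀ c : ℝ, Fᵀ * F ≠ c • (1 : Matrix (Fin ℓ) (Fin ℓ) ℝ)) :
    StrictMonoOn (Afun F) (Set.Ico 0 ((sigmaMax F ^ 2)⁻¹)) ∧
      StrictMonoOn (Nfun F) (Set.Ico 0 ((sigmaMax F ^ 2)⁻¹)) := by
  obtain ⟨i0, j0, hij⟩ := eigen_exists_ne F hΛ
  have hne' : Nonempty (Fin ℓ) := ⟨i0⟩
  set μ := (lam_isHermitian F).eigenvalues with hμdef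
  have hμ0 : ∀ i, 0 ≤ μ i := fun i => (lam_posSemidef F).eigenvalues_nonneg i
  have hμσ : ∀ i, μ i ≤ sigmaMax F ^ 2 := fun i => eigen_le_sigmaMax_sq F i
  have hdq : ∀ q ∈ Set.Ico (0:ℝ) ((sigmaMax F ^ 2)⁻¹), ∀ i, 0 < 1 - q * μ i := by
    intro q hq i
    obtain ⟨hq0, hq1⟩ := hq
    rcases le_or_gt (sigmaMax F ^ 2) 0 with h | h
    · have h0 : μ i = 0 := le_antisymm (le_trans (hμσ i) h) (hμ0 i)
      simp [h0]
    · have h1 : q * sigmaMax F ^ 2 < 1 := by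
        have h2 := mul_lt_mul_of_pos_right hq1 h
        rwa [inv_mul_cancel₀ (ne_of_gt h)] at h2
      nlinarith [mul_le_mul_of_nonneg_left (hμσ i) hq0]
  have hlpos : 0 < (ℓ : ℝ) := by exact_mod_cast i0.pos
  constructor
  · -- Afun
    intro a ha b hb hab
    have hda := hdq a ha
    have hdb := hdq b hb
    obtain ⟨h1a, h2a, h3a⟩ := Sq_spectral F a (fun i => ne_of_gt (hda i))
    obtain ⟨h1b, h2b, h3b⟩ := Sq_spectral F b (fun i => ne_of_gt (hdb i))
    have hTa : 0 < ∑ i, (1 - a * μ i)⁻¹ :=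
      Finset.sum_pos (fun i _ => inv_pos.2 (hda i)) Finset.univ_nonempty
    have hTb : 0 < ∑ i, (1 - b * μ i)⁻¹ :=
      Finset.sum_pos (fun i _ => inv_pos.2 (hdb i)) Finset.univ_nonempty
    have hPa : 0 < ∏ i, (1 - a * μ i)⁻¹ :=
      Finset.prod_pos fun i _ => inv_pos.2 (hda i)
    have hPb : 0 < ∏ i, (1 - b * μ i)⁻¹ :=
      Finset.prod_pos fun i _ => inv_pos.2 (hdb i)
    unfold Afun
    rw [Matrix.det_smul, Matrix.det_smul, Fintype.card_fin, h1a, h3a, h1b, h3b]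
    have hkey := key_A μ ha.1 hab hda hdb ⟨i0, j0, hij⟩
    rw [Fintype.card_fin] at hkey
    have harga : 0 < ((ℓ:ℝ) / ∑ i, (1 - a * μ i)⁻¹)^ℓ * ∏ i, (1 - a * μ i)⁻¹ := by
      positivity
    have hargb : 0 < ((ℓ:ℝ) / ∑ i, (1 - b * μ i)⁻¹)^ℓ * ∏ i, (1 - b * μ i)⁻¹ := by
      positivity
    have hlt : ((ℓ:ℝ) / ∑ i, (1 - b * μ i)⁻¹)^ℓ * ∏ i, (1 - b * μ i)⁻¹
        < ((ℓ:ℝ) / ∑ i, (1 - a * μ i)⁻¹)^ℓ * ∏ i, (1 - a * μ i)⁻¹ := by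
      rw [div_pow, div_pow, div_mul_eq_mul_div, div_mul_eq_mul_div,
        div_lt_div_iff₀ (pow_pos hTb ℓ) (pow_pos hTa ℓ)]
      have h2 := mul_lt_mul_of_pos_left hkey (pow_pos hlpos ℓ)
      nlinarith [h2]
    have hlog := Real.log_lt_log hargb hlt
    linarith
  · -- Nfun
    intro a ha b hb hab
    have hda := hdq a ha
    have hdb := hdq b hb
    obtain ⟨h1a, h2a, h3a⟩ := Sq_spectral F a (fun i => ne_of_gt (hda i))
    obtain ⟨h1b, h2b, h3b⟩ := Sq_spectral F b (fun i => ne_of_gt (hdb i))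
    have hTa : 0 < ∑ i, (1 - a * μ i)⁻¹ :=
      Finset.sum_pos (fun i _ => inv_pos.2 (hda i)) Finset.univ_nonempty
    have hTb : 0 < ∑ i, (1 - b * μ i)⁻¹ :=
      Finset.sum_pos (fun i _ => inv_pos.2 (hdb i)) Finset.univ_nonempty
    unfold Nfun
    rw [h1a, h2a, h1b, h2b]
    have hnum : 0 ≤ ∑ i, μ i * (1 - a * μ i)⁻¹ :=
      Finset.sum_nonneg fun i _ => mul_nonneg (hμ0 i) (inv_nonneg.2 (le_of_lt (hda i)))
    apply Real.sqrt_lt_sqrt (div_nonneg hnum (le_of_lt hTa))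
    rw [div_lt_div_iff₀ hTa hTb]
    exact key_N μ hab hda hdb ⟨i0, j0, hij⟩
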